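/- arXiv:2402.05503 — 2 statements merged into one kernel-verified Lean document; each statement's English description precedes it below -/
import Mathlib

section
/- Let x_i > 0 be pairwise distinct, d_i ≥ 0, H_{ij} = d_i d_j/(x_i + x_j), and suppose x_i is strictly increasing. If H defines a bounded operator on ℓ² with norm ‖H‖, then for every n, N(x_n)·M(x_n) ≤ 4‖H‖², where N(x) = ∑_{x_j ≤ x} d_j² and M(x) = ∑_{x_j ≥ x} d_j²/x_j². -/
open scoped RealInnerProductSpace ENNReal

theorem stmt_6 (x d : ℕ → ℝ) (hx : ∀ i, 0 < x i) (hmono : StrictMono x)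
    (hd : ∀ i, 0 ≤ d i)
    (T : lp (fun _ : ℕ => ℝ) 2 →L[ℝ] lp (fun _ : ℕ => ℝ) 2)
    (hT : ∀ f : lp (fun _ : ℕ => ℝ) 2, ∀ i : ℕ,
      (T f : ∀ _ : ℕ, ℝ) i = ∑' j, d i * d j / (x i + x j) * (f : ∀ _ : ℕ, ℝ) j)
    (n : ℕ) :
    (∑' j, if x j ≤ x n then ENNReal.ofReal ((d j) ^ 2) else 0) *
        (∑' j, if x n ≤ x j then ENNReal.ofReal ((d j) ^ 2 / (x j) ^ 2) else 0)
      ≤ ENNReal.ofReal (4 * ‖T‖ ^ 2) := by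
  classical
  set N : ℝ := ∑ i ∈ Finset.range (n + 1), (d i) ^ 2 with hN
  set A : ℕ → ℝ := fun K => ∑ j ∈ Finset.Icc n K, (d j) ^ 2 / (x j) ^ 2 with hA
  have hN0 : 0 ≤ N := Finset.sum_nonneg fun i _ => sq_nonneg _
  -- the key real inequality
  have hkey : ∀ K : ℕ, N * A K ≤ 4 * ‖T‖ ^ 2 := by
    intro K
    set gfun : ℕ → ℝ := fun j => if j ∈ Finset.range (n + 1) then d j else 0 with hgfun
    set ffun : ℕ → ℝ := fun j => if j ∈ Finset.Icc n K then d j / x j else 0 with hffun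
    have hexp : ((2 : ℝ≥0∞)).toReal ≠ 0 := by norm_num
    have hgmem : Memℓp gfun 2 := by
      apply memℓp_gen
      apply summable_of_ne_finset_zero (s := Finset.range (n + 1))
      intro i hi
      have h0 : gfun i = 0 := if_neg hi
      rw [h0, norm_zero, Real.zero_rpow hexp]
    have hfmem : Memℓp ffun 2 := by
      apply memℓp_gen
      apply summable_of_ne_finset_zero (s := Finset.Icc n K)
      intro i hi
      have h0 : ffun i = 0 := if_neg hi
      rw [h0, norm_zero, Real.zero_rpow hexp]
    set g : lp (fun _ : ℕ => ℝ) 2 := ⟨gfun, hgmem⟩ with hg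
    set f : lp (fun _ : ℕ => ℝ) 2 := ⟨ffun, hfmem⟩ with hf
    have hgi : ∀ i ∈ Finset.range (n + 1), (g : ∀ _ : ℕ, ℝ) i = d i :=
      fun i hi => if_pos hi
    have hgo : ∀ i ∉ Finset.range (n + 1), (g : ∀ _ : ℕ, ℝ) i = 0 :=
      fun i hi => if_neg hi
    have hfi : ∀ i ∈ Finset.Icc n K, (f : ∀ _ : ℕ, ℝ) i = d i / x i :=
      fun i hi => if_pos hi
    have hfo : ∀ i ∉ Finset.Icc n K, (f : ∀ _ : ℕ, ℝ) i = 0 :=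
      fun i hi => if_neg hi
    -- norms
    have hgnorm : ‖g‖ ^ 2 = N := by
      rw [← real_inner_self_eq_norm_sq, lp.inner_eq_tsum,
        tsum_eq_sum (s := Finset.range (n + 1)) (by
          intro b hb; simp [hgo b hb, show gfun b = 0 from if_neg hb])]
      exact Finset.sum_congr rfl fun i hi => by
        simp [RCLike.inner_apply, hgi i hi, show gfun i = d i from if_pos hi, sq]
    have hfnorm : ‖f‖ ^ 2 = A K := by
      rw [← real_inner_self_eq_norm_sq, lp.inner_eq_tsum,
        tsum_eq_sum (s := Finset.Icc n K) (by
          intro b hb; simp [hfo b hb, show ffun b = 0 from if_neg hb])]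
      refine Finset.sum_congr rfl fun i hi => ?_
      rw [RCLike.inner_apply, hfi i hi]
      have hxi := (hx i).ne'
      simp [sq, div_mul_div_comm]
    -- the inner product
    have hinner : (1 / 2 : ℝ) * (N * A K) ≤ ⟪T f, g⟫ := by
      rw [lp.inner_eq_tsum,
        tsum_eq_sum (s := Finset.range (n + 1)) (by
          intro b hb; simp [hgo b hb, show gfun b = 0 from if_neg hb])]
      have hTapp : ∀ i, (T f : ∀ _ : ℕ, ℝ) i
          = ∑ j ∈ Finset.Icc n K, d i * d j / (x i + x j) * (d j / x j) := by
        intro i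
        rw [hT f i, tsum_eq_sum (s := Finset.Icc n K) (by
          intro b hb; simp [hfo b hb, show ffun b = 0 from if_neg hb])]
        exact Finset.sum_congr rfl fun j hj => by rw [hfi j hj]
      have hsplit : (1 / 2 : ℝ) * (N * A K)
          = ∑ i ∈ Finset.range (n + 1), ∑ j ∈ Finset.Icc n K,
              (1 / 2) * ((d i) ^ 2 * ((d j) ^ 2 / (x j) ^ 2)) := by
        simp only [hN, hA, Finset.sum_mul, Finset.mul_sum]
        rw [Finset.sum_comm]
      rw [hsplit]
      refine Finset.sum_le_sum fun i hi => ?_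
      rw [RCLike.inner_apply, hTapp, starRingEnd_apply, star_trivial,
        hgi i hi, mul_comm (d i), Finset.sum_mul]
      refine Finset.sum_le_sum fun j hj => ?_
      have hin : i ≤ n := Nat.lt_succ_iff.mp (Finset.mem_range.mp hi)
      have hnj : n ≤ j := (Finset.mem_Icc.mp hj).1
      have hxij : x i ≤ x j := (hmono.le_iff_le).mpr (hin.trans hnj)
      have hxi := hx i
      have hxj := hx j
      have h2 : x i + x j ≤ 2 * x j := by linarith
      have hpos : 0 < x i + x j := by linarith
      have key : (d i) ^ 2 * (d j) ^ 2 / (2 * x j * x j)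
          ≤ (d i) ^ 2 * (d j) ^ 2 / ((x i + x j) * x j) := by
        apply div_le_div_of_nonneg_left (by positivity) (by positivity)
        exact mul_le_mul_of_nonneg_right h2 hxj.le
      calc (1 / 2 : ℝ) * ((d i) ^ 2 * ((d j) ^ 2 / (x j) ^ 2))
          = (d i) ^ 2 * (d j) ^ 2 / (2 * x j * x j) := by
            rw [sq (x j)]; ring
        _ ≤ (d i) ^ 2 * (d j) ^ 2 / ((x i + x j) * x j) := key
        _ = d i * d j / (x i + x j) * (d j / x j) * d i := by
            rw [← div_div]; ring
    -- Cauchy-Schwarz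
    have hcs : ⟪T f, g⟫ ≤ ‖T‖ * ‖f‖ * ‖g‖ := by
      calc ⟪T f, g⟫ ≤ ‖T f‖ * ‖g‖ := real_inner_le_norm _ _
        _ ≤ ‖T‖ * ‖f‖ * ‖g‖ :=
            mul_le_mul_of_nonneg_right (T.le_opNorm f) (norm_nonneg _)
    have h1 : (1 / 2 : ℝ) * (N * A K) ≤ ‖T‖ * ‖f‖ * ‖g‖ := hinner.trans hcs
    nlinarith [sq_nonneg (‖f‖ * ‖g‖ - 2 * ‖T‖), norm_nonneg f, norm_nonneg g,
      norm_nonneg T, mul_nonneg (norm_nonneg f) (norm_nonneg g), hfnorm, hgnorm]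
  -- now the ENNReal statement
  have hle : ∀ j, x j ≤ x n ↔ j ≤ n := fun j => hmono.le_iff_le
  have hge : ∀ j, x n ≤ x j ↔ n ≤ j := fun j => hmono.le_iff_le
  have hfirst : (∑' j, if x j ≤ x n then ENNReal.ofReal ((d j) ^ 2) else 0)
      = ENNReal.ofReal N := by
    rw [tsum_eq_sum (s := Finset.range (n + 1)) (by
      intro b hb
      rw [if_neg]
      rw [hle b]
      exact fun h => hb (Finset.mem_range.mpr (Nat.lt_succ_of_le h)))]
    rw [hN, ENNReal.ofReal_sum_of_nonneg fun i _ => sq_nonneg _]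
    refine Finset.sum_congr rfl fun i hi => ?_
    rw [if_pos ((hle i).mpr (Nat.lt_succ_iff.mp (Finset.mem_range.mp hi)))]
  rw [hfirst]
  rcases eq_or_lt_of_le hN0 with h0 | hpos
  · rw [← h0, ENNReal.ofReal_zero, zero_mul]
    exact zero_le
  · have hsecond : (∑' j, if x n ≤ x j then ENNReal.ofReal ((d j) ^ 2 / (x j) ^ 2) else 0)
        ≤ ENNReal.ofReal (4 * ‖T‖ ^ 2 / N) := by
      rw [ENNReal.tsum_eq_iSup_sum]
      refine iSup_le fun s => ?_
      set K := s.sup id with hK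
      have hsub : ∀ j ∈ s, n ≤ j → j ∈ Finset.Icc n K :=
        fun j hj hnj => Finset.mem_Icc.mpr ⟨hnj, Finset.le_sup (f := id) hj⟩
      calc ∑ j ∈ s, (if x n ≤ x j then ENNReal.ofReal ((d j) ^ 2 / (x j) ^ 2) else 0)
          ≤ ∑ j ∈ Finset.Icc n K, ENNReal.ofReal ((d j) ^ 2 / (x j) ^ 2) := by
            rw [← Finset.sum_filter]
            apply Finset.sum_le_sum_of_subset
            intro j hj
            rw [Finset.mem_filter] at hj
            exact hsub j hj.1 ((hge j).mp hj.2)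
        _ = ENNReal.ofReal (A K) := by
            rw [hA, ENNReal.ofReal_sum_of_nonneg fun j _ =>
              div_nonneg (sq_nonneg _) (sq_nonneg _)]
        _ ≤ ENNReal.ofReal (4 * ‖T‖ ^ 2 / N) := by
            apply ENNReal.ofReal_le_ofReal
            rw [le_div_iff₀ hpos]
            calc A K * N = N * A K := mul_comm _ _
              _ ≤ 4 * ‖T‖ ^ 2 := hkey K
    calc ENNReal.ofReal N * _ ≤ ENNReal.ofReal N * ENNReal.ofReal (4 * ‖T‖ ^ 2 / N) :=
          mul_le_mul_right hsecond _
      _ = ENNReal.ofReal (N * (4 * ‖T‖ ^ 2 / N)) := (ENNReal.ofReal_mul hN0).symm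
      _ = ENNReal.ofReal (4 * ‖T‖ ^ 2) := by
          rw [mul_div_cancel₀ _ hpos.ne']
end

section
/- Let x_i > 0 be strictly increasing and pairwise distinct, d_i > 0, and suppose that for every x > 0 both N(x) = ∑_{x_j ≤ x} d_j² and M(x) = ∑_{x_j ≥ x} d_j²/x_j² are finite. If f ∈ ℓ² satisfies ∑_{i=1}^∞ f_i d_i e^{−x_i s} = 0 for all s > 0 (with absolute convergence for each s > 0), then f = 0. -/
open Filter Real

theorem stmt_9 (x d : ℕ → ℝ) (hx : ∀ i, 0 < x i) (hmono : StrictMono x)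
    (hd : ∀ i, 0 < d i)
    (hN : ∀ X : ℝ, 0 < X → Summable (fun j => if x j ≤ X then (d j) ^ 2 else 0))
    (hM : ∀ X : ℝ, 0 < X → Summable (fun j => if X ≤ x j then (d j) ^ 2 / (x j) ^ 2 else 0))
    (f : ℕ → ℝ) (hf : Memℓp f 2)
    (habs : ∀ s : ℝ, 0 < s → Summable (fun i => |f i| * d i * Real.exp (-(x i * s))))
    (hzero : ∀ s : ℝ, 0 < s → ∑' i, f i * d i * Real.exp (-(x i * s)) = 0) :
    f = 0 := by
  have hfa : ∀ s : ℝ, 0 < s → Summable (fun i => f i * d i * Real.exp (-(x i * s))) := by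
    intro s hs
    apply Summable.of_abs
    have h := habs s hs
    convert h using 2 with i
    · rfl
    rw [abs_mul, abs_mul, abs_of_pos (hd i), abs_of_pos (Real.exp_pos _)]
  funext n
  induction n using Nat.strong_induction_on with
  | _ n ih =>
  show f n = 0
  set C := ∑' i, |f i| * d i * Real.exp (-(x i * 1)) with hC
  have key : ∀ s : ℝ, 1 ≤ s →
      |f n| * d n ≤ (C * Real.exp (x (n+1))) * Real.exp (-((x (n+1) - x n) * s)) := by
    intro s hs
    have hs0 : 0 < s := lt_of_lt_of_le one_pos hs
    have hsum := hfa s hs0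
    have h1 : f n * d n * Real.exp (-(x n * s))
        = -∑' i, (if i = n then 0 else f i * d i * Real.exp (-(x i * s))) := by
      have h := Summable.tsum_eq_add_tsum_ite hsum n
      rw [hzero s hs0] at h
      linarith
    have hb : ∀ i, |if i = n then 0 else f i * d i * Real.exp (-(x i * s))|
        ≤ (|f i| * d i * Real.exp (-(x i * 1))) * Real.exp (-(x (n+1) * (s-1))) := by
      intro i
      rcases lt_trichotomy i n with h | h | h
      · have hfi : f i = 0 := by simpa using ih i h
        rw [if_neg (Nat.ne_of_lt h), hfi]
        simp only [zero_mul, abs_zero]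
        exact le_refl 0
      · rw [if_pos h, abs_zero]
        exact mul_nonneg (mul_nonneg (mul_nonneg (abs_nonneg _) (hd i).le)
          (Real.exp_pos _).le) (Real.exp_pos _).le
      · rw [if_neg (Nat.ne_of_gt h)]
        rw [abs_mul, abs_mul, abs_of_pos (hd i), abs_of_pos (Real.exp_pos _)]
        have hxi : x (n+1) ≤ x i := hmono.monotone (by omega)
        have he : Real.exp (-(x i * s))
            = Real.exp (-(x i * 1)) * Real.exp (-(x i * (s-1))) := by
          rw [← Real.exp_add]; ring_nf
        rw [he, ← mul_assoc]
        apply mul_le_mul_of_nonneg_left _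
          (mul_nonneg (mul_nonneg (abs_nonneg _) (hd i).le) (Real.exp_pos _).le)
        apply Real.exp_le_exp.2
        nlinarith [hxi, sub_nonneg.2 hs]
    have hsumR : Summable (fun i => (|f i| * d i * Real.exp (-(x i * 1))) * Real.exp (-(x (n+1) * (s-1)))) :=
      (habs 1 one_pos).mul_right _
    have hsumA : Summable (fun i => |if i = n then 0 else f i * d i * Real.exp (-(x i * s))|) :=
      Summable.of_nonneg_of_le (fun i => abs_nonneg _) hb hsumR
    have h2 : |∑' i, (if i = n then 0 else f i * d i * Real.exp (-(x i * s)))|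
        ≤ C * Real.exp (-(x (n+1) * (s-1))) := by
      calc |∑' i, (if i = n then 0 else f i * d i * Real.exp (-(x i * s)))|
          ≤ ∑' i, |if i = n then 0 else f i * d i * Real.exp (-(x i * s))| := by
            have h' := norm_tsum_le_tsum_norm
              (f := fun i => (if i = n then 0 else f i * d i * Real.exp (-(x i * s))))
              (by simpa [Real.norm_eq_abs] using hsumA)
            simpa [Real.norm_eq_abs] using h'
        _ ≤ ∑' i, (|f i| * d i * Real.exp (-(x i * 1))) * Real.exp (-(x (n+1) * (s-1))) :=
            Summable.tsum_le_tsum hb hsumA hsumR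
        _ = C * Real.exp (-(x (n+1) * (s-1))) := by rw [tsum_mul_right]
    have h3 : |f n| * d n * Real.exp (-(x n * s)) ≤ C * Real.exp (-(x (n+1) * (s-1))) := by
      have : |f n * d n * Real.exp (-(x n * s))| ≤ C * Real.exp (-(x (n+1) * (s-1))) := by
        rw [h1, abs_neg]; exact h2
      rwa [abs_mul, abs_mul, abs_of_pos (hd n), abs_of_pos (Real.exp_pos _)] at this
    have hmul := mul_le_mul_of_nonneg_right h3 (le_of_lt (Real.exp_pos (x n * s)))
    calc |f n| * d n = |f n| * d n * Real.exp (-(x n * s)) * Real.exp (x n * s) := by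
          rw [mul_assoc, ← Real.exp_add]; simp
      _ ≤ C * Real.exp (-(x (n+1) * (s-1))) * Real.exp (x n * s) := hmul
      _ = (C * Real.exp (x (n+1))) * Real.exp (-((x (n+1) - x n) * s)) := by
          rw [mul_assoc, ← Real.exp_add, mul_assoc, ← Real.exp_add]; ring_nf
  have hc : 0 < x (n+1) - x n := sub_pos.2 (hmono (Nat.lt_succ_self n))
  have htend : Tendsto (fun s : ℝ => (C * Real.exp (x (n+1))) * Real.exp (-((x (n+1) - x n) * s)))
      atTop (nhds 0) := by
    rw [show (0:ℝ) = (C * Real.exp (x (n+1))) * 0 by ring]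
    apply Tendsto.const_mul
    apply Real.tendsto_exp_atBot.comp
    apply tendsto_neg_atBot_iff.2
    exact Tendsto.const_mul_atTop hc tendsto_id
  have hle : |f n| * d n ≤ 0 :=
    ge_of_tendsto htend (eventually_atTop.2 ⟨1, key⟩)
  have := abs_nonneg (f n)
  have hdn := hd n
  have : |f n| = 0 := by nlinarith
  exact abs_eq_zero.1 this
end
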